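/- Fix distinct elements a_1, ..., a_t, b of [n] with n ≥ t+2. Let Q(a_i,b) be the set partition of [n] consisting of the block {a_i, b} together with singletons {j} for all j ∈ [n] \ {a_i, b}, and let H = { P a set partition of [n] : {a_1}, ..., {a_t} ∈ P and {c} ∈ P for some c ∉ {a_1,...,a_t,b} } ∪ { Q(a_1,b), ..., Q(a_t,b) }. Then |H| = B_{n-t} − B̃_{n-t} − B̃_{n-t-1} + t. -/

import Mathlib

/-- A set partition of `Fin n`, modelled as a finite set of blocks. -/
def IsSetPartition {n : ℕ} (P : Finset (Finset (Fin n))) : Prop :=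
  (∀ b ∈ P, b.Nonempty) ∧ (∀ b ∈ P, ∀ c ∈ P, b ≠ c → Disjoint b c) ∧
    P.sup id = Finset.univ

/-- The `n`-th Bell number: the number of set partitions of an `n`-element set. -/
noncomputable def bell (n : ℕ) : ℕ :=
  Set.ncard {P : Finset (Finset (Fin n)) | IsSetPartition P}

/-- The number of singleton-free set partitions of an `n`-element set. -/
noncomputable def bellT (n : ℕ) : ℕ :=
  Set.ncard {P : Finset (Finset (Fin n)) | IsSetPartition P ∧ ∀ b ∈ P, 2 ≤ b.card}

set_option linter.unusedSectionVars false
set_option linter.unusedVariables false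
set_option maxHeartbeats 1000000

section general
variable {α : Type*} [Fintype α] [DecidableEq α]

def IsPart (P : Finset (Finset α)) : Prop :=
  (∀ b ∈ P, b.Nonempty) ∧ (∀ b ∈ P, ∀ c ∈ P, b ≠ c → Disjoint b c) ∧
    P.sup id = Finset.univ

lemma IsPart.exists_mem {P : Finset (Finset α)} (h : IsPart P) (x : α) :
    ∃ blk ∈ P, x ∈ blk := by
  have := h.2.2
  have hx : x ∈ P.sup id := this ▸ Finset.mem_univ x
  rcases Finset.mem_sup.1 hx with ⟨blk, hb, hxb⟩
  exact ⟨blk, hb, hxb⟩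

variable (S : Finset α)

def upB (s : Finset {x // x ∈ S}) : Finset α := s.map (Function.Embedding.subtype _)
def downB (s : Finset α) : Finset {x // x ∈ S} := s.subtype _

lemma mem_upB {s : Finset {x // x ∈ S}} {x : α} :
    x ∈ upB S s ↔ ∃ hx : x ∈ S, (⟨x, hx⟩ : {x // x ∈ S}) ∈ s := by
  simp [upB, Finset.mem_map, Function.Embedding.subtype]
  constructor
  · rintro ⟨a, b, h, rfl⟩
    exact ⟨b, h⟩
  · rintro ⟨hx, h⟩
    exact ⟨x, hx, h, rfl⟩

lemma mem_downB {s : Finset α} {x : {x // x ∈ S}} :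
    x ∈ downB S s ↔ (x : α) ∈ s := by simp [downB]

lemma upB_subset (s : Finset {x // x ∈ S}) : upB S s ⊆ S := by
  intro x hx; rcases (mem_upB S).1 hx with ⟨hx, _⟩; exact hx

lemma downB_upB (s : Finset {x // x ∈ S}) : downB S (upB S s) = s := by
  ext x; simp [mem_downB, mem_upB]

lemma upB_downB {s : Finset α} (hs : s ⊆ S) : upB S (downB S s) = s := by
  ext x; simp only [mem_upB, mem_downB]
  exact ⟨fun ⟨_, h⟩ => h, fun h => ⟨hs h, h⟩⟩

lemma upB_injective : Function.Injective (upB S) := by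
  intro s t h
  rw [← downB_upB S s, h, downB_upB]

lemma card_upB (s : Finset {x // x ∈ S}) : (upB S s).card = s.card := Finset.card_map _

lemma upB_nonempty {s : Finset {x // x ∈ S}} (h : s.Nonempty) : (upB S s).Nonempty := by
  rcases h with ⟨x, hx⟩; exact ⟨x, (mem_upB S).2 ⟨x.2, by simpa using hx⟩⟩

lemma upB_singleton (x : {y // y ∈ S}) : upB S {x} = {(x : α)} := by
  ext y; simp [mem_upB]


variable {S : Finset α}

def downP (S : Finset α) (P : Finset (Finset α)) : Finset (Finset {x // x ∈ S}) :=
  (P.filter (· ⊆ S)).image (downB S)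

def upP (S : Finset α) (P' : Finset (Finset {x // x ∈ S})) : Finset (Finset α) :=
  P'.image (upB S) ∪ Sᶜ.image (fun x => {x})

/-- Structure of blocks in a partition with forced singletons outside `S`. -/
lemma block_cases {P : Finset (Finset α)} (hP : IsPart P)
    (hforced : ∀ x ∉ S, ({x} : Finset α) ∈ P) {blk : Finset α} (hb : blk ∈ P) :
    blk ⊆ S ∨ ∃ x, x ∉ S ∧ blk = {x} := by
  by_cases h : blk ⊆ S
  · exact Or.inl h
  · right
    rcases Finset.not_subset.1 h with ⟨x, hxb, hxS⟩
    have hx : ({x} : Finset α) ∈ P := hforced x hxS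
    refine ⟨x, hxS, ?_⟩
    by_contra hne
    have := hP.2.1 blk hb {x} hx (by simpa using hne)
    exact (Finset.disjoint_left.1 this hxb) (Finset.mem_singleton_self x)

lemma mem_downP {P : Finset (Finset α)} {blk : Finset α} (hb : blk ⊆ S) :
    downB S blk ∈ downP S P ↔ blk ∈ P := by
  constructor
  · intro h
    rcases Finset.mem_image.1 h with ⟨c, hc, hcb⟩
    rcases Finset.mem_filter.1 hc with ⟨hcP, hcS⟩
    have : c = blk := by
      have := congrArg (upB S) hcb
      rwa [upB_downB S hcS, upB_downB S hb] at this
    exact this ▸ hcP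
  · intro h
    exact Finset.mem_image.2 ⟨blk, Finset.mem_filter.2 ⟨h, hb⟩, rfl⟩

lemma isPart_downP {P : Finset (Finset α)} (hP : IsPart P)
    (hforced : ∀ x ∉ S, ({x} : Finset α) ∈ P) : IsPart (downP S P) := by
  refine ⟨?_, ?_, ?_⟩
  · intro b hb
    rcases Finset.mem_image.1 hb with ⟨c, hc, rfl⟩
    rcases Finset.mem_filter.1 hc with ⟨hcP, hcS⟩
    rcases hP.1 c hcP with ⟨x, hx⟩
    exact ⟨⟨x, hcS hx⟩, (mem_downB S).2 hx⟩
  · intro b hb c hc hne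
    rcases Finset.mem_image.1 hb with ⟨b0, hb0, rfl⟩
    rcases Finset.mem_image.1 hc with ⟨c0, hc0, rfl⟩
    rcases Finset.mem_filter.1 hb0 with ⟨hb0P, hb0S⟩
    rcases Finset.mem_filter.1 hc0 with ⟨hc0P, hc0S⟩
    have hne0 : b0 ≠ c0 := fun h => hne (by rw [h])
    have hd := hP.2.1 b0 hb0P c0 hc0P hne0
    rw [Finset.disjoint_left] at hd ⊢
    intro x hx hx'
    exact hd ((mem_downB S).1 hx) ((mem_downB S).1 hx')
  · apply Finset.eq_univ_of_forall
    intro x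
    rcases hP.exists_mem (x : α) with ⟨blk, hblk, hxblk⟩
    have hbS : blk ⊆ S := by
      rcases block_cases hP hforced hblk with h | ⟨y, hyS, rfl⟩
      · exact h
      · exact absurd (Finset.mem_singleton.1 hxblk ▸ x.2) hyS
    exact Finset.mem_sup.2 ⟨downB S blk, (mem_downP hbS).2 hblk, (mem_downB S).2 hxblk⟩

lemma upP_downP {P : Finset (Finset α)} (hP : IsPart P)
    (hforced : ∀ x ∉ S, ({x} : Finset α) ∈ P) : upP S (downP S P) = P := by
  ext blk
  simp only [upP, Finset.mem_union, Finset.mem_image]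
  constructor
  · rintro (⟨b', hb', rfl⟩ | ⟨x, hx, rfl⟩)
    · rcases Finset.mem_image.1 hb' with ⟨c, hc, rfl⟩
      rcases Finset.mem_filter.1 hc with ⟨hcP, hcS⟩
      rwa [upB_downB S hcS]
    · exact hforced x (by simpa using hx)
  · intro hblk
    rcases block_cases hP hforced hblk with h | ⟨x, hxS, rfl⟩
    · exact Or.inl ⟨downB S blk, (mem_downP h).2 hblk, upB_downB S h⟩
    · exact Or.inr ⟨x, by simpa using hxS, rfl⟩

lemma forced_upP (P' : Finset (Finset {x // x ∈ S})) :
    ∀ x ∉ S, ({x} : Finset α) ∈ upP S P' := fun x hx =>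
  Finset.mem_union_right _ (Finset.mem_image.2 ⟨x, by simpa using hx, rfl⟩)

lemma isPart_upP {P' : Finset (Finset {x // x ∈ S})} (hP' : IsPart P') :
    IsPart (upP S P') := by
  refine ⟨?_, ?_, ?_⟩
  · intro b hb
    rcases Finset.mem_union.1 hb with h | h
    · rcases Finset.mem_image.1 h with ⟨c, hc, rfl⟩
      exact upB_nonempty S (hP'.1 c hc)
    · rcases Finset.mem_image.1 h with ⟨x, _, rfl⟩
      exact ⟨x, Finset.mem_singleton_self x⟩
  · intro b hb c hc hne
    rcases Finset.mem_union.1 hb with h | h <;> rcases Finset.mem_union.1 hc with h' | h'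
    · rcases Finset.mem_image.1 h with ⟨b0, hb0, rfl⟩
      rcases Finset.mem_image.1 h' with ⟨c0, hc0, rfl⟩
      have : b0 ≠ c0 := fun e => hne (by rw [e])
      have hd := hP'.2.1 b0 hb0 c0 hc0 this
      rw [Finset.disjoint_left] at hd ⊢
      intro x hx hx'
      rcases (mem_upB S).1 hx with ⟨hxS, hxb⟩
      rcases (mem_upB S).1 hx' with ⟨_, hxc⟩
      exact hd hxb hxc
    · rcases Finset.mem_image.1 h with ⟨b0, hb0, rfl⟩
      rcases Finset.mem_image.1 h' with ⟨x, hx, rfl⟩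
      rw [Finset.disjoint_left]
      intro y hy hy'
      rw [Finset.mem_singleton] at hy'
      subst hy'
      exact (by simpa using hx : y ∉ S) (upB_subset S b0 hy)
    · rcases Finset.mem_image.1 h with ⟨x, hx, rfl⟩
      rcases Finset.mem_image.1 h' with ⟨c0, hc0, rfl⟩
      rw [Finset.disjoint_right]
      intro y hy hy'
      rw [Finset.mem_singleton] at hy'
      subst hy'
      exact (by simpa using hx : y ∉ S) (upB_subset S c0 hy)
    · rcases Finset.mem_image.1 h with ⟨x, hx, rfl⟩
      rcases Finset.mem_image.1 h' with ⟨y, hy, rfl⟩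
      have : x ≠ y := fun e => hne (by rw [e])
      simp [Finset.disjoint_left, this]
  · apply Finset.eq_univ_of_forall
    intro x
    by_cases hx : x ∈ S
    · rcases hP'.exists_mem ⟨x, hx⟩ with ⟨blk, hblk, hxblk⟩
      exact Finset.mem_sup.2 ⟨upB S blk, Finset.mem_union_left _ (Finset.mem_image.2 ⟨blk, hblk, rfl⟩),
        (mem_upB S).2 ⟨hx, hxblk⟩⟩
    · exact Finset.mem_sup.2 ⟨{x}, forced_upP P' x hx, Finset.mem_singleton_self x⟩

lemma downP_upP {P' : Finset (Finset {x // x ∈ S})} (hP' : IsPart P') :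
    downP S (upP S P') = P' := by
  have h1 : (upP S P').filter (· ⊆ S) = P'.image (upB S) := by
    ext blk
    simp only [Finset.mem_filter, upP, Finset.mem_union, Finset.mem_image]
    constructor
    · rintro ⟨(h | ⟨x, hx, rfl⟩), hsub⟩
      · exact h
      · exact absurd (hsub (Finset.mem_singleton_self x)) (by simpa using hx)
    · rintro ⟨c, hc, rfl⟩
      exact ⟨Or.inl ⟨c, hc, rfl⟩, upB_subset S c⟩
  rw [downP, h1, Finset.image_image]
  have : (downB S) ∘ (upB S) = id := funext (downB_upB S)
  rw [this, Finset.image_id]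

lemma ncard_forced (S : Finset α) (Φ : Finset (Finset α) → Prop)
    (Ψ : Finset (Finset {x // x ∈ S}) → Prop)
    (h : ∀ P : Finset (Finset α), IsPart P → (∀ x ∉ S, ({x} : Finset α) ∈ P) →
      (Φ P ↔ Ψ (downP S P))) :
    {P : Finset (Finset α) | IsPart P ∧ (∀ x ∉ S, ({x} : Finset α) ∈ P) ∧ Φ P}.ncard
      = {P' : Finset (Finset {x // x ∈ S}) | IsPart P' ∧ Ψ P'}.ncard := by
  set L := {P : Finset (Finset α) | IsPart P ∧ (∀ x ∉ S, ({x} : Finset α) ∈ P) ∧ Φ P}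
  have himg : downP S '' L = {P' : Finset (Finset {x // x ∈ S}) | IsPart P' ∧ Ψ P'} := by
    ext P'
    constructor
    · rintro ⟨P, ⟨hP, hf, hΦ⟩, rfl⟩
      exact ⟨isPart_downP hP hf, (h P hP hf).1 hΦ⟩
    · rintro ⟨hP', hΨ⟩
      refine ⟨upP S P', ⟨isPart_upP hP', forced_upP P', ?_⟩, downP_upP hP'⟩
      rw [h _ (isPart_upP hP') (forced_upP P'), downP_upP hP']
      exact hΨ
  have hinj : Set.InjOn (downP S) L := by
    rintro P1 ⟨hP1, hf1, -⟩ P2 ⟨hP2, hf2, -⟩ hEq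
    rw [← upP_downP hP1 hf1, ← upP_downP hP2 hf2, hEq]
  rw [← himg, Set.ncard_image_of_injOn hinj]

end general

section transport
variable {α β : Type*} [Fintype α] [DecidableEq α] [Fintype β] [DecidableEq β]

def mapP (e : α ≃ β) (P : Finset (Finset α)) : Finset (Finset β) :=
  P.image (fun s => s.map e.toEmbedding)

lemma map_map_symm (e : α ≃ β) (s : Finset α) :
    (s.map e.toEmbedding).map e.symm.toEmbedding = s := by
  ext x; simp

lemma mapP_mapP (e : α ≃ β) (P : Finset (Finset α)) : mapP e.symm (mapP e P) = P := by
  rw [mapP, mapP, Finset.image_image]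
  have : ((fun s : Finset β => s.map e.symm.toEmbedding) ∘
      fun s : Finset α => s.map e.toEmbedding) = id := funext (map_map_symm e)
  rw [this, Finset.image_id]

lemma isPart_mapP (e : α ≃ β) {P : Finset (Finset α)} (h : IsPart P) :
    IsPart (mapP e P) := by
  refine ⟨?_, ?_, ?_⟩
  · intro b hb
    rcases Finset.mem_image.1 hb with ⟨s, hs, rfl⟩
    exact (h.1 s hs).map
  · intro b hb c hc hne
    rcases Finset.mem_image.1 hb with ⟨s, hs, rfl⟩
    rcases Finset.mem_image.1 hc with ⟨t, ht, rfl⟩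
    have : s ≠ t := fun hEq => hne (by rw [hEq])
    exact (Finset.disjoint_map _).2 (h.2.1 s hs t ht this)
  · apply Finset.eq_univ_of_forall
    intro y
    rcases h.exists_mem (e.symm y) with ⟨blk, hblk, hxblk⟩
    refine Finset.mem_sup.2 ⟨blk.map e.toEmbedding, Finset.mem_image.2 ⟨blk, hblk, rfl⟩, ?_⟩
    exact Finset.mem_map.2 ⟨e.symm y, hxblk, by simp⟩

lemma singleton_mem_mapP (e : α ≃ β) (P : Finset (Finset α)) (x : α) :
    ({e x} : Finset β) ∈ mapP e P ↔ ({x} : Finset α) ∈ P := by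
  constructor
  · intro hx
    have : ({e.symm (e x)} : Finset α) ∈ mapP e.symm (mapP e P) := by
      refine Finset.mem_image.2 ⟨{e x}, hx, ?_⟩
      simp
    rwa [mapP_mapP, e.symm_apply_apply] at this
  · intro hx
    refine Finset.mem_image.2 ⟨{x}, hx, ?_⟩
    simp

lemma twole_mapP (e : α ≃ β) (P : Finset (Finset α)) :
    (∀ b ∈ mapP e P, 2 ≤ b.card) ↔ (∀ b ∈ P, 2 ≤ b.card) := by
  constructor
  · intro h b hb
    have := h (b.map e.toEmbedding) (Finset.mem_image.2 ⟨b, hb, rfl⟩)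
    simpa using this
  · intro h b hb
    rcases Finset.mem_image.1 hb with ⟨s, hs, rfl⟩
    simpa using h s hs

lemma ncard_transport (e : α ≃ β) (Φ : Finset (Finset α) → Prop)
    (Ψ : Finset (Finset β) → Prop) (h : ∀ P, Φ P ↔ Ψ (mapP e P)) :
    {P : Finset (Finset α) | IsPart P ∧ Φ P}.ncard
      = {Q : Finset (Finset β) | IsPart Q ∧ Ψ Q}.ncard := by
  have himg : mapP e '' {P : Finset (Finset α) | IsPart P ∧ Φ P}
      = {Q : Finset (Finset β) | IsPart Q ∧ Ψ Q} := by
    ext Q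
    constructor
    · rintro ⟨P, ⟨hP, hΦ⟩, rfl⟩
      exact ⟨isPart_mapP e hP, (h P).1 hΦ⟩
    · rintro ⟨hQ, hΨ⟩
      refine ⟨mapP e.symm Q, ⟨isPart_mapP e.symm hQ, ?_⟩, ?_⟩
      · rw [h]
        have : mapP e (mapP e.symm Q) = Q := by
          have := mapP_mapP e.symm Q
          simpa using this
        rwa [this]
      · have := mapP_mapP e.symm Q
        simpa using this
  have hinj : Set.InjOn (mapP e) {P : Finset (Finset α) | IsPart P ∧ Φ P} := by
    rintro P1 - P2 - hEq
    rw [← mapP_mapP e P1, hEq, mapP_mapP]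
  rw [← himg, Set.ncard_image_of_injOn hinj]

end transport

section bellconn

lemma isSetPartition_iff_isPart {n : ℕ} (P : Finset (Finset (Fin n))) :
    IsSetPartition P ↔ IsPart P := Iff.rfl

lemma ncard_isPart (α : Type*) [Fintype α] [DecidableEq α] :
    {P : Finset (Finset α) | IsPart P}.ncard = bell (Fintype.card α) := by
  have h := ncard_transport (Fintype.equivFin α) (fun _ => True) (fun _ => True)
    (fun _ => Iff.rfl)
  simp only [and_true] at h
  rw [h]
  rfl

lemma ncard_isPartFree (α : Type*) [Fintype α] [DecidableEq α] :
    {P : Finset (Finset α) | IsPart P ∧ ∀ b ∈ P, 2 ≤ b.card}.ncard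
      = bellT (Fintype.card α) := by
  have h := ncard_transport (Fintype.equivFin α)
    (fun P => ∀ b ∈ P, 2 ≤ b.card) (fun Q => ∀ b ∈ Q, 2 ≤ b.card)
    (fun P => (twole_mapP (Fintype.equivFin α) P).symm)
  rw [h]
  rfl

end bellconn

/-- `Qpart x y` is the set partition with block `{x,y}` and all other blocks singletons. -/
def Qpart {n : ℕ} (x y : Fin n) : Finset (Finset (Fin n)) :=
  insert ({x, y} : Finset (Fin n))
    (Finset.image (fun j => ({j} : Finset (Fin n))) (Finset.univ \ {x, y}))


lemma downB_singleton {α : Type*} [Fintype α] [DecidableEq α] {S : Finset α} {c : α}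
    (hc : c ∈ S) : downB S {c} = {(⟨c, hc⟩ : {x // x ∈ S})} := by
  ext x
  simp [mem_downB, Subtype.ext_iff]

lemma mem_Qpart {n : ℕ} {x y : Fin n} {blk : Finset (Fin n)} :
    blk ∈ Qpart x y ↔ blk = {x, y} ∨ ∃ j, j ≠ x ∧ j ≠ y ∧ blk = {j} := by
  simp only [Qpart, Finset.mem_insert, Finset.mem_image, Finset.mem_sdiff, Finset.mem_univ,
    true_and, Finset.mem_insert, Finset.mem_singleton]
  constructor
  · rintro (rfl | ⟨j, hj, rfl⟩)
    · exact Or.inl rfl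
    · push_neg at hj
      exact Or.inr ⟨j, hj.1, hj.2, rfl⟩
  · rintro (rfl | ⟨j, hj1, hj2, rfl⟩)
    · exact Or.inl rfl
    · exact Or.inr ⟨j, by tauto, rfl⟩

lemma singleton_not_mem_Qpart {n : ℕ} {x y : Fin n} (hxy : x ≠ y) :
    ({x} : Finset (Fin n)) ∉ Qpart x y := by
  rw [mem_Qpart]
  rintro (h | ⟨j, hj1, hj2, hj3⟩)
  · have : y ∈ ({x} : Finset (Fin n)) := h ▸ (by simp)
    exact hxy.symm (Finset.mem_singleton.1 this)
  · have : j = x := by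
      have : j ∈ ({x} : Finset (Fin n)) := hj3 ▸ (by simp)
      simpa using this
    exact hj1 this

lemma Qpart_inj {n : ℕ} {x y z : Fin n} (hx : x ≠ z) (h : Qpart x z = Qpart y z) :
    x = y := by
  have hmem : ({x, z} : Finset (Fin n)) ∈ Qpart y z := by
    rw [← h]; exact Finset.mem_insert_self _ _
  rw [mem_Qpart] at hmem
  rcases hmem with hEq | ⟨j, hj1, hj2, hj3⟩
  · have : x ∈ ({y, z} : Finset (Fin n)) := hEq ▸ (by simp)
    simp only [Finset.mem_insert, Finset.mem_singleton] at this
    rcases this with h' | h'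
    · exact h'
    · exact absurd h' hx
  · have hzj : z ∈ ({j} : Finset (Fin n)) := by rw [← hj3]; simp
    exact absurd (Finset.mem_singleton.1 hzj).symm hj2

/-- The Hilton–Milner type family `H(a_1,…,a_t,b)`. -/
def HM {n t : ℕ} (a : Fin t → Fin n) (b : Fin n) : Set (Finset (Finset (Fin n))) :=
  {P | IsSetPartition P ∧ (∀ i, ({a i} : Finset (Fin n)) ∈ P) ∧
    ∃ c : Fin n, (∀ i, c ≠ a i) ∧ c ≠ b ∧ ({c} : Finset (Fin n)) ∈ P}
  ∪ {P | ∃ i : Fin t, P = Qpart (a i) b}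

theorem card_HM (n t : ℕ) (ht : 0 < t) (hn : t + 2 ≤ n)
    (a : Fin t → Fin n) (b : Fin n)
    (ha : Function.Injective a) (hab : ∀ i, a i ≠ b) :
    ((HM a b).ncard : ℤ) =
      (bell (n - t) : ℤ) - (bellT (n - t) : ℤ) - (bellT (n - t - 1) : ℤ) + (t : ℤ) := by
  classical
  set A : Set (Finset (Finset (Fin n))) :=
    {P | IsSetPartition P ∧ (∀ i, ({a i} : Finset (Fin n)) ∈ P) ∧
      ∃ c : Fin n, (∀ i, c ≠ a i) ∧ c ≠ b ∧ ({c} : Finset (Fin n)) ∈ P} with hAdef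
  set B : Set (Finset (Finset (Fin n))) := {P | ∃ i : Fin t, P = Qpart (a i) b} with hBdef
  have hHM : HM a b = A ∪ B := rfl
  have hdisj : Disjoint A B := by
    rw [Set.disjoint_left]
    rintro P ⟨-, hsing, -⟩ ⟨i, rfl⟩
    exact singleton_not_mem_Qpart (hab i) (hsing i)
  have hBcard : B.ncard = t := by
    have hBeq : B = ↑(Finset.univ.image (fun i : Fin t => Qpart (a i) b)) := by
      ext P
      simp [hBdef, eq_comm]
    rw [hBeq, Set.ncard_coe_finset,
      Finset.card_image_of_injective _ (fun i j hij => ha (Qpart_inj (hab i) hij)),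
      Finset.card_univ, Fintype.card_fin]
  -- ground set for the reduction
  set S : Finset (Fin n) := Finset.univ \ Finset.image a Finset.univ with hSdef
  have hmemS : ∀ x : Fin n, x ∈ S ↔ ∀ i, x ≠ a i := by
    intro x
    simp only [hSdef, Finset.mem_sdiff, Finset.mem_univ, true_and, Finset.mem_image,
      not_exists]
    exact ⟨fun h i hEq => h i hEq.symm, fun h i hEq => h i hEq.symm⟩
  have hbS : b ∈ S := (hmemS b).2 fun i => (hab i).symm
  have hScard : S.card = n - t := by
    rw [hSdef, Finset.card_sdiff_of_subset (Finset.subset_univ _), Finset.card_univ, Fintype.card_fin,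
      Finset.card_image_of_injective _ ha, Finset.card_univ, Fintype.card_fin]
  have hcardSub : Fintype.card {x // x ∈ S} = n - t := by
    rw [Fintype.card_coe, hScard]
  set b' : {x // x ∈ S} := ⟨b, hbS⟩ with hb'def
  set S₂ : Finset {x // x ∈ S} := {b'}ᶜ with hS2def
  have hnotS2 : ∀ x : {x // x ∈ S}, x ∉ S₂ ↔ x = b' := by
    intro x
    simp [hS2def]
  set E1 : Set (Finset (Finset {x // x ∈ S})) := {P' | IsPart P' ∧
      ∃ c' : {x // x ∈ S}, c' ≠ b' ∧ ({c'} : Finset {x // x ∈ S}) ∈ P'} with hE1def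
  set E2 : Set (Finset (Finset {x // x ∈ S})) :=
    {P' | IsPart P' ∧ ∀ blk ∈ P', 2 ≤ blk.card} with hE2def
  set E3 : Set (Finset (Finset {x // x ∈ S})) := {P' | IsPart P' ∧
      (∀ x ∉ S₂, ({x} : Finset {x // x ∈ S}) ∈ P') ∧
      ∀ blk ∈ P', blk ⊆ S₂ → 2 ≤ blk.card} with hE3def
  -- |A| = |E1|
  have hAeq : A = {P : Finset (Finset (Fin n)) | IsPart P ∧
      (∀ x ∉ S, ({x} : Finset (Fin n)) ∈ P) ∧
      ∃ c : Fin n, (∀ i, c ≠ a i) ∧ c ≠ b ∧ ({c} : Finset (Fin n)) ∈ P} := by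
    ext P
    simp only [hAdef, Set.mem_setOf_eq, isSetPartition_iff_isPart]
    constructor
    · rintro ⟨hP, hs, hc⟩
      refine ⟨hP, ?_, hc⟩
      intro x hx
      have : ∃ i, x = a i := by
        by_contra hcon
        push_neg at hcon
        exact hx ((hmemS x).2 hcon)
      rcases this with ⟨i, rfl⟩
      exact hs i
    · rintro ⟨hP, hs, hc⟩
      refine ⟨hP, ?_, hc⟩
      intro i
      apply hs
      simp only [hmemS, not_forall]
      exact ⟨i, by simp⟩
  have hE1card : A.ncard = E1.ncard := by
    rw [hAeq, hE1def]
    apply ncard_forced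
    intro P hP hf
    constructor
    · rintro ⟨c, hca, hcb, hcP⟩
      have hcS : c ∈ S := (hmemS c).2 hca
      have hsub : ({c} : Finset (Fin n)) ⊆ S := by simpa using hcS
      refine ⟨⟨c, hcS⟩, fun hEq => hcb (congrArg Subtype.val hEq), ?_⟩
      have := (mem_downP hsub).2 hcP
      rwa [downB_singleton hcS] at this
    · rintro ⟨c', hne, hcP'⟩
      refine ⟨(c' : Fin n), (hmemS _).1 c'.2, fun hEq => hne (Subtype.ext hEq), ?_⟩
      have hsub : ({(c' : Fin n)} : Finset (Fin n)) ⊆ S := by simpa using c'.2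
      rw [← mem_downP hsub, downB_singleton c'.2]
      simpa using hcP'
  -- decomposition of all partitions of the subtype
  have hsplit : {P' : Finset (Finset {x // x ∈ S}) | IsPart P'} = E1 ∪ E2 ∪ E3 := by
    ext P
    simp only [Set.mem_setOf_eq, Set.mem_union, hE1def, hE2def, hE3def]
    constructor
    · intro hP
      by_cases h1 : ∃ c' : {x // x ∈ S}, c' ≠ b' ∧ ({c'} : Finset {x // x ∈ S}) ∈ P
      · exact Or.inl (Or.inl ⟨hP, h1⟩)
      push_neg at h1
      by_cases h2 : ({b'} : Finset {x // x ∈ S}) ∈ P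
      · refine Or.inr ⟨hP, ?_, ?_⟩
        · intro x hx
          rw [hnotS2] at hx
          rwa [hx]
        · intro blk hblk hsub
          by_contra hlt
          push_neg at hlt
          have hone : blk.card = 1 := by
            have := Finset.card_pos.2 (hP.1 blk hblk)
            omega
          rcases Finset.card_eq_one.1 hone with ⟨c, rfl⟩
          have hcb : c ≠ b' := by
            intro hEq
            have hcS2 : c ∈ S₂ := hsub (by simp)
            rw [hS2def] at hcS2
            simp [hEq] at hcS2
          exact (h1 c hcb) hblk
      · refine Or.inl (Or.inr ⟨hP, ?_⟩)
        intro blk hblk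
        by_contra hlt
        push_neg at hlt
        have hone : blk.card = 1 := by
          have := Finset.card_pos.2 (hP.1 blk hblk)
          omega
        rcases Finset.card_eq_one.1 hone with ⟨c, rfl⟩
        by_cases hcb : c = b'
        · exact h2 (hcb ▸ hblk)
        · exact (h1 c hcb) hblk
    · rintro ((⟨h, -⟩ | ⟨h, -⟩) | ⟨h, -, -⟩) <;> exact h
  have hd12 : Disjoint E1 E2 := by
    rw [Set.disjoint_left]
    rintro P ⟨-, c', -, hc⟩ ⟨-, h2⟩
    have := h2 _ hc
    simp at this
  have hd13 : Disjoint E1 E3 := by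
    rw [Set.disjoint_left]
    rintro P ⟨-, c', hne, hc⟩ ⟨-, -, h3⟩
    have hsub : ({c'} : Finset {x // x ∈ S}) ⊆ S₂ := by
      intro x hx
      rw [Finset.mem_singleton] at hx
      subst hx
      rw [hS2def]
      simpa using hne
    have := h3 _ hc hsub
    simp at this
  have hd23 : Disjoint E2 E3 := by
    rw [Set.disjoint_left]
    rintro P ⟨-, h2⟩ ⟨-, hf, -⟩
    have hb'P := hf b' (by rw [hnotS2])
    have := h2 _ hb'P
    simp at this
  -- counting
  have hFullcard : {P' : Finset (Finset {x // x ∈ S}) | IsPart P'}.ncard = bell (n - t) := by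
    rw [ncard_isPart, hcardSub]
  have hE2card : E2.ncard = bellT (n - t) := by
    rw [hE2def, ncard_isPartFree, hcardSub]
  have hS2card : Fintype.card {x // x ∈ S₂} = n - t - 1 := by
    rw [Fintype.card_coe, hS2def, Finset.card_compl, Finset.card_singleton, hcardSub]
  have hE3card : E3.ncard = bellT (n - t - 1) := by
    rw [hE3def]
    have key := ncard_forced S₂ (fun P => ∀ blk ∈ P, blk ⊆ S₂ → 2 ≤ blk.card)
      (fun Q => ∀ blk ∈ Q, 2 ≤ blk.card) ?_
    · rw [key, ncard_isPartFree, hS2card]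
    · intro P hP hf
      constructor
      · intro h blk' hblk'
        rcases Finset.mem_image.1 hblk' with ⟨c, hc, rfl⟩
        rcases Finset.mem_filter.1 hc with ⟨hcP, hcS⟩
        have h2 := h c hcP hcS
        have hcard : (downB S₂ c).card = c.card := by
          conv_rhs => rw [← upB_downB S₂ hcS]
          rw [card_upB]
        omega
      · intro h blk hblk hsub
        have h2 := h _ ((mem_downP hsub).2 hblk)
        have hcard : (downB S₂ blk).card = blk.card := by
          conv_rhs => rw [← upB_downB S₂ hsub]
          rw [card_upB]
        omega
  have hsum : bell (n - t) = E1.ncard + bellT (n - t) + bellT (n - t - 1) := by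
    rw [← hFullcard, hsplit,
      Set.ncard_union_eq (Set.disjoint_union_left.2 ⟨hd13, hd23⟩) (Set.toFinite _)
        (Set.toFinite _),
      Set.ncard_union_eq hd12 (Set.toFinite _) (Set.toFinite _), hE2card, hE3card]
  rw [hHM, Set.ncard_union_eq hdisj (Set.toFinite _) (Set.toFinite _), hBcard, hE1card]
  push_cast [hsum]
  ring
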